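/- Let φ : [a, b] → ℝ be a twice continuously differentiable convex function such that φ'' is also convex on [a, b]. Then for every x ∈ [a, b], e^{−φ(x)} ≥ 0.372 · √(φ''(x)) · min( ∫_x^b e^{−φ(t)} dt, ∫_a^x e^{−φ(t)} dt ). -/

import Mathlib

set_option maxHeartbeats 1000000

open Set MeasureTheory intervalIntegral


lemma numeric_main : (0.372:ℝ) * Real.exp (0.372^2/2) * (0.372 + Real.sqrt (2*Real.pi)/2) ≤ 1 := by
  have h1 : Real.exp (0.372^2/2) ≤ 1.075 := by
    have h := Real.add_one_le_exp (-(0.372^2/2) : ℝ)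
    have hpos : (0:ℝ) < Real.exp (-(0.372^2/2)) := Real.exp_pos _
    have he : Real.exp ((0.372:ℝ)^2/2) * Real.exp (-(0.372^2/2)) = 1 := by
      rw [← Real.exp_add]; norm_num
    nlinarith
  have h2 : Real.sqrt (2*Real.pi) ≤ 2.51 := by
    rw [show (2.51:ℝ) = Real.sqrt (2.51^2) from (Real.sqrt_sq (by norm_num)).symm]
    exact Real.sqrt_le_sqrt (by nlinarith [Real.pi_lt_d2])
  have h3 : (0:ℝ) < Real.exp (0.372^2/2) := Real.exp_pos _
  have h4 : (0:ℝ) ≤ Real.sqrt (2*Real.pi) := Real.sqrt_nonneg _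
  nlinarith

lemma aux_exp (r T : ℝ) (hr : 0 < r) (hT : 0 ≤ T) :
    ∫ u in (0:ℝ)..T, Real.exp (-(r*u)) ≤ 1/r := by
  have heq : ∫ u in (0:ℝ)..T, Real.exp (-(r*u)) = ∫ u in (0:ℝ)..T, Real.exp ((-r)*u) := by
    congr 1; ext u; ring_nf
  rw [heq]
  have h2 := intervalIntegral.integral_comp_mul_left (a := (0:ℝ)) (b := T)
    (fun v => Real.exp v) (c := -r) (by linarith : (-r:ℝ) ≠ 0)
  simp only [mul_zero] at h2
  rw [h2, integral_exp]
  have h0 : Real.exp (-r*T) ≤ 1 := Real.exp_le_one_iff.mpr (by nlinarith)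
  have h1 : (0:ℝ) < Real.exp (-r*T) := Real.exp_pos _
  rw [smul_eq_mul, Real.exp_zero]
  rw [show (-r)⁻¹ * (Real.exp (-r*T) - 1) = (1 - Real.exp (-r*T))/r by rw [eq_div_iff (ne_of_gt hr)]; field_simp; ring]
  rw [div_le_div_iff₀ hr hr]
  nlinarith

lemma aux_gauss (c s T : ℝ) (hc : 0 < c) (hs : 0 ≤ s) (hT : 0 ≤ T) :
    ∫ w in (0:ℝ)..T, Real.exp (-(c/2) * (w - s)^2) ≤ s + Real.sqrt (Real.pi/(c/2)) / 2 := by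
  have hcont : ∀ A B : ℝ, IntervalIntegrable (fun w => Real.exp (-(c/2) * (w - s)^2)) volume A B :=
    fun A B => (Continuous.intervalIntegrable (by continuity) A B)
  have hle1 : ∀ w : ℝ, Real.exp (-(c/2) * (w - s)^2) ≤ 1 := fun w =>
    Real.exp_le_one_iff.mpr (by nlinarith [sq_nonneg (w - s)])
  have hIoi : ∀ T' : ℝ, 0 ≤ T' → (∫ u in (0:ℝ)..T', Real.exp (-(c/2) * u^2))
      ≤ Real.sqrt (Real.pi/(c/2)) / 2 := by
    intro T' hT'
    rw [intervalIntegral.integral_of_le hT']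
    calc ∫ u in Ioc (0:ℝ) T', Real.exp (-(c/2) * u^2)
        ≤ ∫ u in Ioi (0:ℝ), Real.exp (-(c/2) * u^2) := by
          apply setIntegral_mono_set
          · exact (integrable_exp_neg_mul_sq (by linarith : (0:ℝ) < c/2)).integrableOn
          · exact Filter.Eventually.of_forall (fun u => (Real.exp_pos _).le)
          · exact (Ioc_subset_Ioi_self).eventuallyLE
      _ = Real.sqrt (Real.pi/(c/2)) / 2 := integral_gaussian_Ioi (c/2)
  rcases le_or_gt T s with h | h
  · calc (∫ w in (0:ℝ)..T, Real.exp (-(c/2) * (w - s)^2))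
        ≤ ∫ _ in (0:ℝ)..T, (1:ℝ) := by
          apply intervalIntegral.integral_mono_on hT (hcont 0 T)
            (intervalIntegrable_const) (fun w _ => hle1 w)
      _ = T := by simp
      _ ≤ s + Real.sqrt (Real.pi/(c/2)) / 2 := by
          have : (0:ℝ) ≤ Real.sqrt (Real.pi/(c/2)) := Real.sqrt_nonneg _
          linarith
  · have hsplit : (∫ w in (0:ℝ)..s, Real.exp (-(c/2) * (w - s)^2))
        + (∫ w in s..T, Real.exp (-(c/2) * (w - s)^2))
        = ∫ w in (0:ℝ)..T, Real.exp (-(c/2) * (w - s)^2) :=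
      intervalIntegral.integral_add_adjacent_intervals (hcont 0 s) (hcont s T)
    rw [← hsplit]
    have h1 : (∫ w in (0:ℝ)..s, Real.exp (-(c/2) * (w - s)^2)) ≤ s := by
      calc (∫ w in (0:ℝ)..s, Real.exp (-(c/2) * (w - s)^2))
          ≤ ∫ _ in (0:ℝ)..s, (1:ℝ) := intervalIntegral.integral_mono_on hs (hcont 0 s)
              (intervalIntegrable_const) (fun w _ => hle1 w)
        _ = s := by simp
    have h2 : (∫ w in s..T, Real.exp (-(c/2) * (w - s)^2))
        ≤ Real.sqrt (Real.pi/(c/2)) / 2 := by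
      have := intervalIntegral.integral_comp_sub_right (a := s) (b := T)
        (fun u => Real.exp (-(c/2) * u^2)) s
      simp only [sub_self] at this
      rw [this]
      exact hIoi (T - s) (by linarith)
    linarith

lemma aux_int_quad (c q T : ℝ) (hc : 0 < c) (hq : 0 ≤ q) (hT : 0 ≤ T) :
    ∫ u in (0:ℝ)..T, Real.exp (q * Real.sqrt c * u - c * u^2 / 2)
      ≤ Real.exp (q^2/2) * (q + Real.sqrt (2*Real.pi)/2) / Real.sqrt c := by
  have hσ : 0 < Real.sqrt c := Real.sqrt_pos.mpr hc
  have hσ2 : Real.sqrt c ^ 2 = c := Real.sq_sqrt hc.le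
  set s : ℝ := q / Real.sqrt c with hs
  have hs0 : 0 ≤ s := div_nonneg hq hσ.le
  have e1 : c * s = q * Real.sqrt c := by
    rw [hs]
    field_simp
    nlinarith
  have e2 : c * s^2 = q^2 := by
    rw [hs, div_pow, hσ2]
    field_simp
  have hpt : ∀ u : ℝ, Real.exp (q * Real.sqrt c * u - c * u^2 / 2)
      = Real.exp (q^2/2) * Real.exp (-(c/2) * (u - s)^2) := by
    intro u
    rw [← Real.exp_add]
    congr 1
    linear_combination (-u) * e1 + (1/2) * e2
  have : (∫ u in (0:ℝ)..T, Real.exp (q * Real.sqrt c * u - c * u^2 / 2))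
      = Real.exp (q^2/2) * ∫ u in (0:ℝ)..T, Real.exp (-(c/2) * (u - s)^2) := by
    rw [← intervalIntegral.integral_const_mul]
    congr 1; ext u; exact hpt u
  rw [this]
  have hb := aux_gauss c s T hc hs0 hT
  have hval : s + Real.sqrt (Real.pi/(c/2)) / 2 = (q + Real.sqrt (2*Real.pi)/2) / Real.sqrt c := by
    have h0 : Real.pi / (c/2) = (2*Real.pi) / c := by
      field_simp
    rw [h0, Real.sqrt_div (by positivity : (0:ℝ) ≤ 2*Real.pi), hs]
    field_simp
  rw [mul_div_assoc, ← hval]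
  exact mul_le_mul_of_nonneg_left hb (Real.exp_pos _).le

lemma taylor_right {a b x c : ℝ} {φ φ' φ'' : ℝ → ℝ}
    (hd1 : ∀ t ∈ Icc a b, HasDerivWithinAt φ (φ' t) (Icc a b) t)
    (hd2 : ∀ t ∈ Icc a b, HasDerivWithinAt φ' (φ'' t) (Icc a b) t)
    (hx : x ∈ Icc a b) (hc : ∀ t ∈ Icc x b, c ≤ φ'' t) :
    ∀ t ∈ Icc x b, φ x + φ' x * (t - x) + c * (t - x)^2/2 ≤ φ t := by
  have hxb : Icc x b ⊆ Icc a b := Icc_subset_Icc hx.1 le_rfl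
  have hnhds : ∀ u ∈ interior (Icc x b), Icc a b ∈ nhds u := by
    intro u hu
    rw [interior_Icc] at hu
    exact Filter.mem_of_superset (isOpen_Ioo.mem_nhds
      (⟨lt_of_le_of_lt hx.1 hu.1, hu.2⟩ : u ∈ Ioo a b)) Ioo_subset_Icc_self
  have hD1 : ∀ u ∈ interior (Icc x b), HasDerivAt φ (φ' u) u := fun u hu =>
    (hd1 u (hxb (interior_subset hu))).hasDerivAt (hnhds u hu)
  have hD2 : ∀ u ∈ interior (Icc x b), HasDerivAt φ' (φ'' u) u := fun u hu =>
    (hd2 u (hxb (interior_subset hu))).hasDerivAt (hnhds u hu)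
  have hc1 : ContinuousOn φ (Icc x b) := fun u hu =>
    ((hd1 u (hxb hu)).mono hxb).continuousWithinAt
  have hc2 : ContinuousOn φ' (Icc x b) := fun u hu =>
    ((hd2 u (hxb hu)).mono hxb).continuousWithinAt
  -- step 1 : g1 = φ' u - φ' x - c(u-x) is monotone on Icc x b
  set g1 : ℝ → ℝ := fun u => φ' u - φ' x - c * (u - x) with hg1
  have hg1d : ∀ u ∈ interior (Icc x b), HasDerivAt g1 (φ'' u - c) u := by
    intro u hu
    have h1 : HasDerivAt (fun u : ℝ => φ' x + c * (u - x)) c u := by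
      simpa using (((hasDerivAt_id u).sub_const x).const_mul c).const_add (φ' x)
    simpa [hg1, sub_sub] using (hD2 u hu).fun_sub h1
  have hmono1 : MonotoneOn g1 (Icc x b) := by
    apply monotoneOn_of_deriv_nonneg (convex_Icc x b)
    · exact (hc2.sub continuousOn_const).sub (continuousOn_const.mul
        (continuousOn_id.sub continuousOn_const))
    · intro u hu
      exact (hg1d u hu).differentiableAt.differentiableWithinAt
    · intro u hu
      rw [(hg1d u hu).deriv]
      have : u ∈ Icc x b := interior_subset hu
      linarith [hc u this]
  have hg1nn : ∀ u ∈ Icc x b, 0 ≤ g1 u := by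
    intro u hu
    have hxm : x ∈ Icc x b := ⟨le_rfl, hu.1.trans hu.2⟩
    have := hmono1 hxm hu hu.1
    simpa [hg1] using this
  -- step 2 : g2 monotone
  set g2 : ℝ → ℝ := fun u => φ u - (φ x + φ' x * (u - x) + c * (u - x)^2/2) with hg2
  have hg2d : ∀ u ∈ interior (Icc x b), HasDerivAt g2 (g1 u) u := by
    intro u hu
    have h1 : HasDerivAt (fun u : ℝ => φ x + φ' x * (u - x) + c * (u - x)^2/2)
        (φ' x + c * (u - x)) u := by
      have hq : HasDerivAt (fun u : ℝ => (u - x)^2) (2 * (u - x)) u := by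
        simpa using ((hasDerivAt_id u).sub_const x).fun_pow 2
      have := ((((hasDerivAt_id u).sub_const x).const_mul (φ' x)).const_add (φ x)).fun_add
        ((hq.const_mul c).div_const 2)
      exact this.congr_deriv (by ring)
    have := (hD1 u hu).fun_sub h1
    exact this.congr_deriv (by simp only [hg1]; ring)
  have hmono2 : MonotoneOn g2 (Icc x b) := by
    apply monotoneOn_of_deriv_nonneg (convex_Icc x b)
    · apply hc1.sub
      apply ContinuousOn.add
      apply ContinuousOn.add continuousOn_const
      · exact continuousOn_const.mul (continuousOn_id.sub continuousOn_const)
      · exact ContinuousOn.div_const (continuousOn_const.mul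
          ((continuousOn_id.sub continuousOn_const).pow 2)) 2
    · intro u hu
      exact (hg2d u hu).differentiableAt.differentiableWithinAt
    · intro u hu
      rw [(hg2d u hu).deriv]
      exact hg1nn u (interior_subset hu)
  intro t ht
  have hxm : x ∈ Icc x b := ⟨le_rfl, ht.1.trans ht.2⟩
  have := hmono2 hxm ht ht.1
  simp only [hg2] at this
  simp at this
  linarith

lemma taylor_left {a b x c : ℝ} {φ φ' φ'' : ℝ → ℝ}
    (hd1 : ∀ t ∈ Icc a b, HasDerivWithinAt φ (φ' t) (Icc a b) t)
    (hd2 : ∀ t ∈ Icc a b, HasDerivWithinAt φ' (φ'' t) (Icc a b) t)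
    (hx : x ∈ Icc a b) (hc : ∀ t ∈ Icc a x, c ≤ φ'' t) :
    ∀ t ∈ Icc a x, φ x + φ' x * (t - x) + c * (t - x)^2/2 ≤ φ t := by
  have hxb : Icc a x ⊆ Icc a b := Icc_subset_Icc le_rfl hx.2
  have hnhds : ∀ u ∈ interior (Icc a x), Icc a b ∈ nhds u := by
    intro u hu
    rw [interior_Icc] at hu
    exact Filter.mem_of_superset (isOpen_Ioo.mem_nhds
      (⟨hu.1, lt_of_lt_of_le hu.2 hx.2⟩ : u ∈ Ioo a b)) Ioo_subset_Icc_self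
  have hD1 : ∀ u ∈ interior (Icc a x), HasDerivAt φ (φ' u) u := fun u hu =>
    (hd1 u (hxb (interior_subset hu))).hasDerivAt (hnhds u hu)
  have hD2 : ∀ u ∈ interior (Icc a x), HasDerivAt φ' (φ'' u) u := fun u hu =>
    (hd2 u (hxb (interior_subset hu))).hasDerivAt (hnhds u hu)
  have hc1 : ContinuousOn φ (Icc a x) := fun u hu =>
    ((hd1 u (hxb hu)).mono hxb).continuousWithinAt
  have hc2 : ContinuousOn φ' (Icc a x) := fun u hu =>
    ((hd2 u (hxb hu)).mono hxb).continuousWithinAt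
  set g1 : ℝ → ℝ := fun u => φ' u - φ' x - c * (u - x) with hg1
  have hg1d : ∀ u ∈ interior (Icc a x), HasDerivAt g1 (φ'' u - c) u := by
    intro u hu
    have h1 : HasDerivAt (fun u : ℝ => φ' x + c * (u - x)) c u := by
      simpa using (((hasDerivAt_id u).sub_const x).const_mul c).const_add (φ' x)
    simpa [hg1, sub_sub] using (hD2 u hu).fun_sub h1
  have hmono1 : MonotoneOn g1 (Icc a x) := by
    apply monotoneOn_of_deriv_nonneg (convex_Icc a x)
    · exact (hc2.sub continuousOn_const).sub (continuousOn_const.mul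
        (continuousOn_id.sub continuousOn_const))
    · intro u hu
      exact (hg1d u hu).differentiableAt.differentiableWithinAt
    · intro u hu
      rw [(hg1d u hu).deriv]
      have : u ∈ Icc a x := interior_subset hu
      linarith [hc u this]
  have hg1np : ∀ u ∈ Icc a x, g1 u ≤ 0 := by
    intro u hu
    have hxm : x ∈ Icc a x := ⟨hu.1.trans hu.2, le_rfl⟩
    have := hmono1 hu hxm hu.2
    simpa [hg1] using this
  set g2 : ℝ → ℝ := fun u => φ u - (φ x + φ' x * (u - x) + c * (u - x)^2/2) with hg2
  have hg2d : ∀ u ∈ interior (Icc a x), HasDerivAt g2 (g1 u) u := by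
    intro u hu
    have h1 : HasDerivAt (fun u : ℝ => φ x + φ' x * (u - x) + c * (u - x)^2/2)
        (φ' x + c * (u - x)) u := by
      have hq : HasDerivAt (fun u : ℝ => (u - x)^2) (2 * (u - x)) u := by
        simpa using ((hasDerivAt_id u).sub_const x).fun_pow 2
      have := ((((hasDerivAt_id u).sub_const x).const_mul (φ' x)).const_add (φ x)).fun_add
        ((hq.const_mul c).div_const 2)
      exact this.congr_deriv (by ring)
    have := (hD1 u hu).fun_sub h1
    exact this.congr_deriv (by simp only [hg1]; ring)
  have hanti2 : AntitoneOn g2 (Icc a x) := by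
    apply antitoneOn_of_deriv_nonpos (convex_Icc a x)
    · apply hc1.sub
      apply ContinuousOn.add
      apply ContinuousOn.add continuousOn_const
      · exact continuousOn_const.mul (continuousOn_id.sub continuousOn_const)
      · exact ContinuousOn.div_const (continuousOn_const.mul
          ((continuousOn_id.sub continuousOn_const).pow 2)) 2
    · intro u hu
      exact (hg2d u hu).differentiableAt.differentiableWithinAt
    · intro u hu
      rw [(hg2d u hu).deriv]
      exact hg1np u (interior_subset hu)
  intro t ht
  have hxm : x ∈ Icc a x := ⟨ht.1.trans ht.2, le_rfl⟩
  have := hanti2 ht hxm ht.2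
  simp only [hg2] at this
  simp at this
  linarith

lemma dicho {a b x : ℝ} {f : ℝ → ℝ} (hf : ConvexOn ℝ (Icc a b) f) (hx : x ∈ Icc a b) :
    (∀ t ∈ Icc x b, f x ≤ f t) ∨ (∀ s ∈ Icc a x, f x ≤ f s) := by
  by_contra h
  push_neg at h
  obtain ⟨⟨t, ht, htl⟩, ⟨s, hs, hsl⟩⟩ := h
  have hst : s < x := lt_of_le_of_ne hs.2 (by rintro rfl; linarith)
  have hxt : x < t := lt_of_le_of_ne ht.1 (by rintro rfl; linarith)
  have hsmem : s ∈ Icc a b := ⟨hs.1, hs.2.trans hx.2⟩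
  have htmem : t ∈ Icc a b := ⟨hx.1.trans ht.1, ht.2⟩
  set A : ℝ := (t - x)/(t - s) with hA
  set B : ℝ := (x - s)/(t - s) with hB
  have hts : 0 < t - s := by linarith
  have hA1 : 0 < A := by rw [hA]; apply div_pos <;> linarith
  have hB1 : 0 < B := by rw [hB]; apply div_pos <;> linarith
  have hA0 : 0 ≤ A := hA1.le
  have hB0 : 0 ≤ B := hB1.le
  have hAB : A + B = 1 := by rw [hA, hB]; field_simp; ring
  have hcomb := hf.2 hsmem htmem hA0 hB0 hAB
  have hpt : A • s + B • t = x := by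
    simp only [smul_eq_mul, hA, hB]; field_simp; ring
  rw [hpt] at hcomb
  simp only [smul_eq_mul] at hcomb
  have hsum : A * f x + B * f x = f x := by rw [← add_mul, hAB, one_mul]
  have h1 := mul_lt_mul_of_pos_left hsl hA1
  have h2 := mul_lt_mul_of_pos_left htl hB1
  linarith

/-- one-dimensional isoperimetric inequality for `e^{-φ}` when both
`φ` and `φ''` are convex. -/
theorem one_dim_isoperimetry
    (a b : ℝ) (hab : a ≤ b)
    (φ φ' φ'' : ℝ → ℝ)
    (hd1 : ∀ t ∈ Icc a b, HasDerivWithinAt φ (φ' t) (Icc a b) t)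
    (hd2 : ∀ t ∈ Icc a b, HasDerivWithinAt φ' (φ'' t) (Icc a b) t)
    (hcont : ContinuousOn φ'' (Icc a b))
    (hconv : ConvexOn ℝ (Icc a b) φ)
    (hconv'' : ConvexOn ℝ (Icc a b) φ'') :
    ∀ x ∈ Icc a b,
      Real.exp (-φ x) ≥ 0.372 * Real.sqrt (φ'' x) *
        min (∫ t in x..b, Real.exp (-φ t)) (∫ t in a..x, Real.exp (-φ t)) := by
  intro x hx
  by_cases hc : 0 < φ'' x
  swap
  · rw [Real.sqrt_eq_zero'.mpr (not_lt.mp hc)]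
    simpa using (Real.exp_pos (-φ x)).le
  set c := φ'' x with hcdef
  set p := φ' x with hpdef
  set σ := Real.sqrt c with hσdef
  have hσ : 0 < σ := Real.sqrt_pos.mpr hc
  have hφcont : ContinuousOn φ (Icc a b) := fun u hu => (hd1 u hu).continuousWithinAt
  have hint : ∀ u v : ℝ, u ∈ Icc a b → v ∈ Icc a b →
      IntervalIntegrable (fun t => Real.exp (-φ t)) volume u v := by
    intro u v hu hv
    apply ContinuousOn.intervalIntegrable
    apply (Real.continuous_exp.comp_continuousOn (hφcont.neg.mono _))
    exact (uIcc_subset_Icc hu hv)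
  set IR := ∫ t in x..b, Real.exp (-φ t) with hIR
  set IL := ∫ t in a..x, Real.exp (-φ t) with hIL
  suffices key : min IR IL ≤ Real.exp (-φ x) / (0.372 * σ) by
    rw [ge_iff_le]
    have h372 : (0:ℝ) < 0.372 * σ := by positivity
    calc 0.372 * σ * min IR IL ≤ 0.372 * σ * (Real.exp (-φ x) / (0.372*σ)) :=
          mul_le_mul_of_nonneg_left key h372.le
      _ = Real.exp (-φ x) := by field_simp
  -- three cases
  rcases le_or_gt (0.372*σ) p with hp | hp
  · -- Case 1 : p large positive, use right integral with tangent line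
    have hp0 : 0 < p := lt_of_lt_of_le (by positivity) hp
    have hIRb : IR ≤ Real.exp (-φ x) * (1/p) := by
      have hmono : IR ≤ ∫ t in x..b, Real.exp (-φ x) * Real.exp (-(p*(t-x))) := by
        apply intervalIntegral.integral_mono_on hx.2 (hint x b hx (right_mem_Icc.mpr hab))
          (Continuous.intervalIntegrable (by fun_prop) x b)
        intro t ht
        have htm : t ∈ Icc a b := ⟨hx.1.trans ht.1, ht.2⟩
        have hφt : φ x + p * (t - x) ≤ φ t := by
          rcases eq_or_lt_of_le ht.1 with rfl | hlt
          · simp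
          · have hs := hconv.le_slope_of_hasDerivWithinAt hx htm hlt (hd1 x hx)
            rw [slope_def_field] at hs
            have := (le_div_iff₀ (by linarith : (0:ℝ) < t - x)).mp hs
            linarith
        rw [← Real.exp_add]
        apply Real.exp_le_exp.mpr
        linarith
      have heq : (∫ t in x..b, Real.exp (-φ x) * Real.exp (-(p*(t-x))))
          = Real.exp (-φ x) * ∫ t in x..b, Real.exp (-(p*(t-x))) :=
        intervalIntegral.integral_const_mul _ _
      have htrans : (∫ t in x..b, Real.exp (-(p*(t-x))))
          = ∫ u in (0:ℝ)..(b-x), Real.exp (-(p*u)) := by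
        have := intervalIntegral.integral_comp_sub_right (a := x) (b := b)
          (fun u => Real.exp (-(p*u))) x
        simpa using this
      rw [heq, htrans] at hmono
      exact hmono.trans (mul_le_mul_of_nonneg_left
        (aux_exp p (b-x) hp0 (by linarith [hx.2])) (Real.exp_pos _).le)
    refine (min_le_left _ _).trans (hIRb.trans ?_)
    rw [mul_one_div, div_le_div_iff₀ hp0 (by positivity)]
    have := (Real.exp_pos (-φ x)).le
    nlinarith
  rcases le_or_gt p (-(0.372*σ)) with hp' | hp'
  · -- Case 2 : p large negative, use left integral with tangent line
    have hp0 : 0 < -p := by nlinarith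
    have hILb : IL ≤ Real.exp (-φ x) * (1/(-p)) := by
      have hmono : IL ≤ ∫ t in a..x, Real.exp (-φ x) * Real.exp (-((-p)*(x-t))) := by
        apply intervalIntegral.integral_mono_on hx.1 (hint a x (left_mem_Icc.mpr hab) hx)
          (Continuous.intervalIntegrable (by fun_prop) a x)
        intro t ht
        have htm : t ∈ Icc a b := ⟨ht.1, ht.2.trans hx.2⟩
        have hφt : φ x + p * (t - x) ≤ φ t := by
          rcases eq_or_lt_of_le ht.2 with rfl | hlt
          · simp
          · have hs := hconv.slope_le_of_hasDerivWithinAt htm hx hlt (hd1 x hx)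
            rw [slope_def_field] at hs
            have := (div_le_iff₀ (by linarith : (0:ℝ) < x - t)).mp hs
            linarith
        rw [← Real.exp_add]
        apply Real.exp_le_exp.mpr
        nlinarith
      have heq : (∫ t in a..x, Real.exp (-φ x) * Real.exp (-((-p)*(x-t))))
          = Real.exp (-φ x) * ∫ t in a..x, Real.exp (-((-p)*(x-t))) :=
        intervalIntegral.integral_const_mul _ _
      have htrans : (∫ t in a..x, Real.exp (-((-p)*(x-t))))
          = ∫ u in (0:ℝ)..(x-a), Real.exp (-((-p)*u)) := by
        have := intervalIntegral.integral_comp_sub_left (a := a) (b := x)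
          (fun u => Real.exp (-((-p)*u))) x
        simpa using this
      rw [heq, htrans] at hmono
      exact hmono.trans (mul_le_mul_of_nonneg_left
        (aux_exp (-p) (x-a) hp0 (by linarith [hx.1])) (Real.exp_pos _).le)
    refine (min_le_right _ _).trans (hILb.trans ?_)
    rw [mul_one_div, div_le_div_iff₀ hp0 (by positivity)]
    have := (Real.exp_pos (-φ x)).le
    nlinarith
  · -- Case 3 : |p| small, use curvature on one side
    have hnum : Real.exp (0.372^2/2) * (0.372 + Real.sqrt (2*Real.pi)/2) / σ
        ≤ 1 / (0.372 * σ) := by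
      rw [div_le_div_iff₀ hσ (by positivity)]
      nlinarith [numeric_main, Real.exp_pos ((0.372:ℝ)^2/2), Real.sqrt_nonneg (2*Real.pi), hσ]
    rcases dicho hconv'' hx with hcurv | hcurv
    · -- curvature ≥ c on the right
      have htay := taylor_right hd1 hd2 hx hcurv
      have hmono : IR ≤ ∫ t in x..b, Real.exp (-φ x) *
          Real.exp (0.372 * σ * (t-x) - c * (t-x)^2 / 2) := by
        apply intervalIntegral.integral_mono_on hx.2 (hint x b hx (right_mem_Icc.mpr hab))
          (Continuous.intervalIntegrable (by fun_prop) x b)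
        intro t ht
        rw [← Real.exp_add]
        apply Real.exp_le_exp.mpr
        have h1 := htay t ht
        nlinarith [ht.1, hp.le, sub_nonneg.mpr ht.1]
      have heq : (∫ t in x..b, Real.exp (-φ x) * Real.exp (0.372 * σ * (t-x) - c * (t-x)^2/2))
          = Real.exp (-φ x) * ∫ t in x..b, Real.exp (0.372 * σ * (t-x) - c * (t-x)^2/2) :=
        intervalIntegral.integral_const_mul _ _
      have htrans : (∫ t in x..b, Real.exp (0.372 * σ * (t-x) - c * (t-x)^2/2))
          = ∫ u in (0:ℝ)..(b-x), Real.exp (0.372 * σ * u - c * u^2/2) := by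
        have := intervalIntegral.integral_comp_sub_right (a := x) (b := b)
          (fun u => Real.exp (0.372 * σ * u - c * u^2/2)) x
        simpa using this
      rw [heq, htrans] at hmono
      have := aux_int_quad c 0.372 (b-x) hc (by norm_num) (by linarith [hx.2])
      refine (min_le_left _ _).trans (hmono.trans ?_)
      calc Real.exp (-φ x) * ∫ u in (0:ℝ)..(b-x), Real.exp (0.372 * σ * u - c * u^2/2)
          ≤ Real.exp (-φ x) * (Real.exp (0.372^2/2) * (0.372 + Real.sqrt (2*Real.pi)/2) / σ) :=
            mul_le_mul_of_nonneg_left this (Real.exp_pos _).le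
        _ ≤ Real.exp (-φ x) * (1/(0.372*σ)) :=
            mul_le_mul_of_nonneg_left hnum (Real.exp_pos _).le
        _ = Real.exp (-φ x) / (0.372*σ) := by rw [mul_one_div]
    · -- curvature ≥ c on the left
      have htay := taylor_left hd1 hd2 hx hcurv
      have hmono : IL ≤ ∫ t in a..x, Real.exp (-φ x) *
          Real.exp (0.372 * σ * (x-t) - c * (x-t)^2 / 2) := by
        apply intervalIntegral.integral_mono_on hx.1 (hint a x (left_mem_Icc.mpr hab) hx)
          (Continuous.intervalIntegrable (by fun_prop) a x)
        intro t ht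
        rw [← Real.exp_add]
        apply Real.exp_le_exp.mpr
        have h1 := htay t ht
        nlinarith [ht.2, hp'.le, sub_nonneg.mpr ht.2]
      have heq : (∫ t in a..x, Real.exp (-φ x) * Real.exp (0.372 * σ * (x-t) - c * (x-t)^2/2))
          = Real.exp (-φ x) * ∫ t in a..x, Real.exp (0.372 * σ * (x-t) - c * (x-t)^2/2) :=
        intervalIntegral.integral_const_mul _ _
      have htrans : (∫ t in a..x, Real.exp (0.372 * σ * (x-t) - c * (x-t)^2/2))
          = ∫ u in (0:ℝ)..(x-a), Real.exp (0.372 * σ * u - c * u^2/2) := by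
        have := intervalIntegral.integral_comp_sub_left (a := a) (b := x)
          (fun u => Real.exp (0.372 * σ * u - c * u^2/2)) x
        simpa using this
      rw [heq, htrans] at hmono
      have := aux_int_quad c 0.372 (x-a) hc (by norm_num) (by linarith [hx.1])
      refine (min_le_right _ _).trans (hmono.trans ?_)
      calc Real.exp (-φ x) * ∫ u in (0:ℝ)..(x-a), Real.exp (0.372 * σ * u - c * u^2/2)
          ≤ Real.exp (-φ x) * (Real.exp (0.372^2/2) * (0.372 + Real.sqrt (2*Real.pi)/2) / σ) :=
            mul_le_mul_of_nonneg_left this (Real.exp_pos _).le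
        _ ≤ Real.exp (-φ x) * (1/(0.372*σ)) :=
            mul_le_mul_of_nonneg_left hnum (Real.exp_pos _).le
        _ = Real.exp (-φ x) / (0.372*σ) := by rw [mul_one_div]
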